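/- Define X(z) = z·(32z² − 7·(1+4z)^{3/2} + 36z + 7) / (6·(1+4z)^{5/2}·(√(1+4z)+1)) for real z ∈ (−1/4, 1/4). Then X is real-analytic at 0, its Taylor coefficients at 0 of orders 0 and 1 vanish, and for every integer n ≥ 2 the n-th Taylor coefficient of X at 0 (i.e. X^{(n)}(0)/n!) equals (−1)^{n−1} · ( (1/2)·C(2n,n)·(n+1) − 2^{2n−1} − (1/6)·(2n−1)!/(n!·(n−2)!) ), where C(2n,n) denotes the central binomial coefficient. -/

import Mathlib

open Real Filter Finset Topology

/-- `X(z) = z(32z² − 7(1+4z)^{3/2} + 36z + 7) / (6(1+4z)^{5/2}(√(1+4z)+1))`. -/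
noncomputable def Xfun (z : ℝ) : ℝ :=
  z * (32 * z ^ 2 - 7 * (1 + 4 * z) ^ ((3 : ℝ) / 2) + 36 * z + 7)
    / (6 * (1 + 4 * z) ^ ((5 : ℝ) / 2) * (Real.sqrt (1 + 4 * z) + 1))

/-- falling-style product `∏ i < n, (α - i)` -/
noncomputable def Pp (α : ℝ) (n : ℕ) : ℝ := ∏ i ∈ Finset.range n, (α - i)

lemma Pp_zero (α : ℝ) : Pp α 0 = 1 := by simp [Pp]

lemma Pp_succ (α : ℝ) (n : ℕ) : Pp α (n + 1) = Pp α n * (α - n) :=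
  Finset.prod_range_succ _ _

/-- partial-fraction form of `Xfun` -/
noncomputable def gfun (z : ℝ) : ℝ :=
  1 / 12 + (1 / 2) * (1 + 4 * z) ^ (-1 : ℝ) - (3 / 8) * (1 + 4 * z) ^ (-(1 / 2) : ℝ)
    - (5 / 24) * (1 + 4 * z) ^ (-(3 / 2) : ℝ)

lemma Xfun_eq_gfun {z : ℝ} (hz : -(1 / 4) < z) : Xfun z = gfun z := by
  have hu : (0 : ℝ) < 1 + 4 * z := by linarith
  set s : ℝ := Real.sqrt (1 + 4 * z) with hs_def
  have hs : 0 < s := Real.sqrt_pos.mpr hu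
  have hs2 : s ^ 2 = 1 + 4 * z := Real.sq_sqrt hu.le
  have h12 : (1 + 4 * z) ^ ((1 : ℝ) / 2) = s := by
    rw [hs_def, Real.sqrt_eq_rpow]
  have hpow : ∀ k : ℕ, (1 + 4 * z) ^ ((k : ℝ) / 2) = s ^ k := by
    intro k
    rw [show ((k : ℝ) / 2) = (1 / 2) * (k : ℝ) by ring, Real.rpow_mul hu.le,
      Real.rpow_natCast, h12]
  have h32 : (1 + 4 * z) ^ ((3 : ℝ) / 2) = s ^ 3 := by
    simpa using hpow 3
  have h52 : (1 + 4 * z) ^ ((5 : ℝ) / 2) = s ^ 5 := by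
    simpa using hpow 5
  have hm1 : (1 + 4 * z) ^ (-1 : ℝ) = (s ^ 2)⁻¹ := by
    rw [Real.rpow_neg_one, hs2]
  have hm12 : (1 + 4 * z) ^ (-(1 / 2) : ℝ) = s⁻¹ := by
    rw [Real.rpow_neg hu.le, h12]
  have hm32 : (1 + 4 * z) ^ (-(3 / 2) : ℝ) = (s ^ 3)⁻¹ := by
    rw [Real.rpow_neg hu.le, h32]
  have hz' : z = (s ^ 2 - 1) / 4 := by rw [hs2]; ring
  rw [Xfun, gfun, h32, h52, hm1, hm12, hm32, hz']
  have h1 : s + 1 ≠ 0 := by positivity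
  field_simp
  rw [show (1 : ℝ) + (s ^ 2 - 1) = s ^ 2 by ring, Real.sqrt_sq hs.le]
  ring

lemma hasDerivAt_rpow_affine {z : ℝ} (hu : (0 : ℝ) < 1 + 4 * z) (β : ℝ) :
    HasDerivAt (fun w : ℝ => (1 + 4 * w) ^ β) (4 * β * (1 + 4 * z) ^ (β - 1)) z := by
  have h4 : HasDerivAt (fun w : ℝ => 1 + 4 * w) 4 z := by
    simpa using ((hasDerivAt_id z).const_mul (4 : ℝ)).const_add (1 : ℝ)
  simpa [mul_comm, mul_assoc, mul_left_comm] using h4.rpow_const (Or.inl hu.ne')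

lemma iter_gfun (n : ℕ) : ∀ z : ℝ, -(1 / 4) < z →
    iteratedDeriv n gfun z = (if n = 0 then (1 : ℝ) / 12 else 0)
      + (1 / 2) * 4 ^ n * Pp (-1) n * (1 + 4 * z) ^ ((-1 : ℝ) - n)
      - (3 / 8) * 4 ^ n * Pp (-(1 / 2)) n * (1 + 4 * z) ^ ((-(1 / 2) : ℝ) - n)
      - (5 / 24) * 4 ^ n * Pp (-(3 / 2)) n * (1 + 4 * z) ^ ((-(3 / 2) : ℝ) - n) := by
  induction n with
  | zero =>
      intro z hz
      simp [iteratedDeriv_zero, gfun, Pp_zero]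
  | succ n ih =>
      intro z hz
      have hu : (0 : ℝ) < 1 + 4 * z := by linarith
      rw [iteratedDeriv_succ]
      have hev : iteratedDeriv n gfun =ᶠ[𝓝 z] fun w : ℝ =>
          (if n = 0 then (1 : ℝ) / 12 else 0)
          + (1 / 2) * 4 ^ n * Pp (-1) n * (1 + 4 * w) ^ ((-1 : ℝ) - n)
          - (3 / 8) * 4 ^ n * Pp (-(1 / 2)) n * (1 + 4 * w) ^ ((-(1 / 2) : ℝ) - n)
          - (5 / 24) * 4 ^ n * Pp (-(3 / 2)) n * (1 + 4 * w) ^ ((-(3 / 2) : ℝ) - n) := by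
        filter_upwards [eventually_gt_nhds hz] with w hw using ih w hw
      rw [hev.deriv_eq]
      have H : HasDerivAt (fun w : ℝ =>
          (if n = 0 then (1 : ℝ) / 12 else 0)
          + (1 / 2) * 4 ^ n * Pp (-1) n * (1 + 4 * w) ^ ((-1 : ℝ) - n)
          - (3 / 8) * 4 ^ n * Pp (-(1 / 2)) n * (1 + 4 * w) ^ ((-(1 / 2) : ℝ) - n)
          - (5 / 24) * 4 ^ n * Pp (-(3 / 2)) n * (1 + 4 * w) ^ ((-(3 / 2) : ℝ) - n))
          ((1 / 2) * 4 ^ n * Pp (-1) n * (4 * ((-1 : ℝ) - n) * (1 + 4 * z) ^ ((-1 : ℝ) - n - 1))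
          - (3 / 8) * 4 ^ n * Pp (-(1 / 2)) n *
              (4 * ((-(1 / 2) : ℝ) - n) * (1 + 4 * z) ^ ((-(1 / 2) : ℝ) - n - 1))
          - (5 / 24) * 4 ^ n * Pp (-(3 / 2)) n *
              (4 * ((-(3 / 2) : ℝ) - n) * (1 + 4 * z) ^ ((-(3 / 2) : ℝ) - n - 1))) z := by
        exact ((((hasDerivAt_rpow_affine hu _).const_mul _).const_add _).sub
          ((hasDerivAt_rpow_affine hu _).const_mul _)).sub
          ((hasDerivAt_rpow_affine hu _).const_mul _)
      rw [H.deriv]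
      have e1 : ((-1 : ℝ) - n - 1) = (-1 : ℝ) - (n + 1 : ℕ) := by push_cast; ring
      have e2 : ((-(1 / 2) : ℝ) - n - 1) = (-(1 / 2) : ℝ) - (n + 1 : ℕ) := by push_cast; ring
      have e3 : ((-(3 / 2) : ℝ) - n - 1) = (-(3 / 2) : ℝ) - (n + 1 : ℕ) := by push_cast; ring
      rw [e1, e2, e3, Pp_succ, Pp_succ, Pp_succ, if_neg n.succ_ne_zero]
      push_cast
      ring


lemma analyticAt_rpow_affine (α : ℝ) : AnalyticAt ℝ (fun z : ℝ => (1 + 4 * z) ^ α) 0 := by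
  have h1 : AnalyticAt ℂ (fun w : ℂ => (1 + 4 * w) ^ (α : ℂ)) 0 := by
    apply AnalyticAt.cpow
    · exact analyticAt_const.add (analyticAt_const.mul (analyticAt_id ..))
    · exact analyticAt_const
    · simp
  have h0 : AnalyticAt ℝ (fun z : ℝ => (z : ℂ)) 0 := Complex.ofRealCLM.analyticAt 0
  have h1' : AnalyticAt ℝ (fun w : ℂ => (1 + 4 * w) ^ (α : ℂ)) ((fun z : ℝ => (z : ℂ)) 0) := by
    simpa using h1.restrictScalars (𝕜 := ℝ)
  have h2 : AnalyticAt ℝ (fun z : ℝ => ((1 + 4 * (z : ℂ)) ^ (α : ℂ)).re) 0 := by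
    exact (Complex.reCLM.analyticAt _).comp (h1'.comp h0)
  apply h2.congr
  filter_upwards [eventually_gt_nhds (by norm_num : (-(1/4) : ℝ) < 0)] with z hz
  have hu : (0 : ℝ) ≤ 1 + 4 * z := by linarith
  have : ((1 + 4 * z : ℝ) : ℂ) = 1 + 4 * (z : ℂ) := by push_cast; ring
  rw [← this, ← Complex.ofReal_cpow hu, Complex.ofReal_re]

lemma Pp_neg_one (n : ℕ) : Pp (-1) n = (-1) ^ n * n.factorial := by
  induction n with
  | zero => simp [Pp]
  | succ n ih =>
      rw [Pp_succ, ih, Nat.factorial_succ]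
      push_cast
      ring

lemma Pp_neg_half (n : ℕ) :
    Pp (-(1 / 2)) n = (-1) ^ n * (2 * n).factorial / (4 ^ n * n.factorial) := by
  induction n with
  | zero => simp [Pp]
  | succ n ih =>
      have hf : ((n.factorial : ℝ)) ≠ 0 := Nat.cast_ne_zero.mpr n.factorial_ne_zero
      have h4 : (4 : ℝ) ^ n ≠ 0 := by positivity
      have h1 : ((2 * (n + 1)).factorial : ℝ)
          = (2 * n + 2) * (2 * n + 1) * (2 * n).factorial := by
        rw [show 2 * (n + 1) = (2 * n + 1) + 1 by ring, Nat.factorial_succ, Nat.factorial_succ]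
        push_cast; ring
      rw [Pp_succ, ih, h1, Nat.factorial_succ]
      push_cast
      field_simp
      ring

lemma Pp_neg_3half (n : ℕ) :
    Pp (-(3 / 2)) n = (-1) ^ n * (2 * n + 1).factorial / (4 ^ n * n.factorial) := by
  induction n with
  | zero => simp [Pp]
  | succ n ih =>
      have hf : ((n.factorial : ℝ)) ≠ 0 := Nat.cast_ne_zero.mpr n.factorial_ne_zero
      have h4 : (4 : ℝ) ^ n ≠ 0 := by positivity
      have h1 : ((2 * (n + 1) + 1).factorial : ℝ)
          = (2 * n + 3) * (2 * n + 2) * (2 * n + 1).factorial := by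
        rw [show 2 * (n + 1) + 1 = ((2 * n + 1) + 1) + 1 by ring, Nat.factorial_succ,
          Nat.factorial_succ]
        push_cast; ring
      have h2 : (((n + 1).factorial : ℝ)) = (n + 1) * n.factorial := by
        rw [Nat.factorial_succ]; push_cast; ring
      rw [Pp_succ, ih, h1, h2]
      field_simp
      ring


lemma Xfun_eventuallyEq : Xfun =ᶠ[𝓝 (0 : ℝ)] gfun := by
  filter_upwards [eventually_gt_nhds (by norm_num : (-(1/4) : ℝ) < 0)] with z hz
  exact Xfun_eq_gfun hz

theorem taylor_coeff_Xfun :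
    AnalyticAt ℝ Xfun 0 ∧
    iteratedDeriv 0 Xfun 0 = 0 ∧
    iteratedDeriv 1 Xfun 0 = 0 ∧
    ∀ n : ℕ, 2 ≤ n →
      iteratedDeriv n Xfun 0 / (n.factorial : ℝ) =
        (-1 : ℝ) ^ (n - 1) *
          ((1 / 2) * (Nat.choose (2 * n) n : ℝ) * ((n : ℝ) + 1) - (2 : ℝ) ^ (2 * n - 1)
            - (1 / 6) * ((2 * n - 1).factorial : ℝ)
                / ((n.factorial : ℝ) * ((n - 2).factorial : ℝ))) := by
  have h0 : (-(1/4) : ℝ) < 0 := by norm_num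
  refine ⟨?_, ?_, ?_, ?_⟩
  · have hg : AnalyticAt ℝ gfun 0 := by
      exact ((analyticAt_const.add
        (analyticAt_const.mul (analyticAt_rpow_affine (-1)))).sub
        (analyticAt_const.mul (analyticAt_rpow_affine (-(1/2))))).sub
        (analyticAt_const.mul (analyticAt_rpow_affine (-(3/2))))
    exact hg.congr Xfun_eventuallyEq.symm
  · simp [iteratedDeriv_zero, Xfun]
  · rw [Xfun_eventuallyEq.iteratedDeriv_eq 1, iter_gfun 1 0 h0]
    norm_num [Pp_succ, Pp_zero, Real.one_rpow]
  · intro n hn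
    rw [Xfun_eventuallyEq.iteratedDeriv_eq n, iter_gfun n 0 h0,
      Pp_neg_one, Pp_neg_half, Pp_neg_3half]
    obtain ⟨m, rfl⟩ := Nat.exists_eq_add_of_le hn
    have e1 : 2 + m - 1 = m + 1 := by omega
    have e2 : 2 + m - 2 = m := by omega
    have e3 : 2 * (2 + m) - 1 = 2 * m + 3 := by omega
    have e4 : 2 * (2 + m) - (2 + m) = 2 + m := by omega
    rw [e1, e2, e3, Nat.cast_choose ℝ (by omega : 2 + m ≤ 2 * (2 + m)), e4]
    have hfm : ((m.factorial : ℝ)) ≠ 0 := Nat.cast_ne_zero.mpr m.factorial_ne_zero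
    have hf2 : (((2 * m + 3).factorial : ℝ)) ≠ 0 := Nat.cast_ne_zero.mpr (2*m+3).factorial_ne_zero
    have hfac1 : (((2 + m).factorial : ℝ)) = (m + 2) * (m + 1) * m.factorial := by
      rw [show 2 + m = (m + 1) + 1 by omega, Nat.factorial_succ, Nat.factorial_succ]
      push_cast; ring
    have hfac2 : (((2 * (2 + m)).factorial : ℝ)) = (2 * m + 4) * (2 * m + 3).factorial := by
      rw [show 2 * (2 + m) = (2 * m + 3) + 1 by omega, Nat.factorial_succ]
      push_cast; ring
    have hfac3 : (((2 * (2 + m) + 1).factorial : ℝ))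
        = (2 * m + 5) * (2 * m + 4) * (2 * m + 3).factorial := by
      rw [show 2 * (2 + m) + 1 = ((2 * m + 3) + 1) + 1 by omega, Nat.factorial_succ,
        Nat.factorial_succ]
      push_cast; ring
    rw [hfac1, hfac2, hfac3]
    have hp1 : (2 : ℝ) ^ (2 * m + 3) = 8 * 4 ^ m := by
      rw [pow_add, pow_mul]; ring
    have hp2 : (4 : ℝ) ^ (2 + m) = 16 * 4 ^ m := by
      rw [pow_add]; ring
    rw [if_neg (by omega : 2 + m ≠ 0)]
    simp only [mul_zero, add_zero, Real.one_rpow, mul_one]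
    rw [hp1, hp2]
    push_cast
    field_simp
    ring
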